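/- arXiv:1202.4858 — 2 statements merged into one kernel-verified Lean document; each statement's English description precedes it below -/
import Mathlib

section
/- Consider the initial value problem -p² u''(x) + q(x) u(x) = λ u(x) on [a,b] with u(a) = c₀, u'(a) = c₁, where p ≠ 0 is real, q : [a,b] → ℝ is continuous, and λ ∈ ℂ. Then this problem has a unique solution u(·, λ) on [a,b], and for each fixed x ∈ [a,b], the map λ ↦ u(x, λ) is an entire (holomorphic everywhere) function of λ. -/
open MeasureTheory intervalIntegral Set Metric Filter Function
open scoped Interval Topology Nat

namespace Stmt11Aux

noncomputable def FF (a : ℝ) (P : ℂ) (w : ℝ → ℂ) (c₀ c₁ : ℂ) : ℕ → ℂ → ℝ → ℂ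
  | 0 => fun _ x => c₀ + c₁ * ((x : ℂ) - (a : ℂ))
  | n + 1 => fun lam x =>
      ∫ t in a..x, ((x : ℂ) - (t : ℂ)) * ((w t - lam) / P * FF a P w c₀ c₁ n lam t)

noncomputable def dFF (a : ℝ) (P : ℂ) (w : ℝ → ℂ) (c₀ c₁ : ℂ) : ℕ → ℂ → ℝ → ℂ
  | 0 => fun _ _ => 0
  | n + 1 => fun lam x =>
      ∫ t in a..x, ((x : ℂ) - (t : ℂ)) *
        ((w t - lam) / P * dFF a P w c₀ c₁ n lam t - FF a P w c₀ c₁ n lam t / P)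

variable {a : ℝ} {P : ℂ} {w : ℝ → ℂ} {c₀ c₁ : ℂ} {Cw : ℝ}

lemma FF_cont (hw : Continuous w) (n : ℕ) :
    Continuous (fun pr : ℂ × ℝ => FF a P w c₀ c₁ n pr.1 pr.2) ∧
      Continuous (fun pr : ℂ × ℝ => dFF a P w c₀ c₁ n pr.1 pr.2) := by
  induction n with
  | zero =>
      refine ⟨?_, ?_⟩
      · simp only [FF]; fun_prop
      · simp only [dFF]; exact continuous_const
  | succ n ih =>
      obtain ⟨ih1, ih2⟩ := ih
      have hmap : Continuous fun pq : (ℂ × ℝ) × ℝ => (pq.1.1, pq.2) := by fun_prop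
      have hF : Continuous fun pq : (ℂ × ℝ) × ℝ => FF a P w c₀ c₁ n pq.1.1 pq.2 :=
        ih1.comp hmap
      have hdF : Continuous fun pq : (ℂ × ℝ) × ℝ => dFF a P w c₀ c₁ n pq.1.1 pq.2 :=
        ih2.comp hmap
      constructor
      · simp only [FF]
        exact continuous_parametric_intervalIntegral_of_continuous
          (f := fun (pr : ℂ × ℝ) t =>
            ((pr.2 : ℂ) - (t : ℂ)) * ((w t - pr.1) / P * FF a P w c₀ c₁ n pr.1 t))
          (by
            have : Continuous fun pq : (ℂ × ℝ) × ℝ =>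
                ((pq.1.2 : ℂ) - (pq.2 : ℂ)) *
                  ((w pq.2 - pq.1.1) / P * FF a P w c₀ c₁ n pq.1.1 pq.2) := by
              apply Continuous.mul
              · fun_prop
              · exact (((hw.comp continuous_snd).sub continuous_fst.fst).div_const P).mul hF
            exact this)
          continuous_snd
      · simp only [dFF]
        exact continuous_parametric_intervalIntegral_of_continuous
          (f := fun (pr : ℂ × ℝ) t =>
            ((pr.2 : ℂ) - (t : ℂ)) *
              ((w t - pr.1) / P * dFF a P w c₀ c₁ n pr.1 t - FF a P w c₀ c₁ n pr.1 t / P))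
          (by
            have : Continuous fun pq : (ℂ × ℝ) × ℝ =>
                ((pq.1.2 : ℂ) - (pq.2 : ℂ)) *
                  ((w pq.2 - pq.1.1) / P * dFF a P w c₀ c₁ n pq.1.1 pq.2
                    - FF a P w c₀ c₁ n pq.1.1 pq.2 / P) := by
              apply Continuous.mul
              · fun_prop
              · exact ((((hw.comp continuous_snd).sub continuous_fst.fst).div_const P).mul hdF).sub
                  (hF.div_const P)
            exact this)
          continuous_snd

lemma integral_sub_pow (a x : ℝ) (m : ℕ) :
    ∫ t in a..x, (t - a) ^ m = (x - a) ^ (m + 1) / (m + 1) := by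
  have h := intervalIntegral.integral_comp_sub_right (a := a) (b := x)
    (fun s => s ^ m) a
  rw [h, sub_self, integral_pow, zero_pow (by omega)]
  ring

lemma FF_norm (hw : Continuous w) (hwb : ∀ t, ‖w t‖ ≤ Cw) (hCw : 0 ≤ Cw)
    (n : ℕ) (lam : ℂ) (x : ℝ) :
    ‖FF a P w c₀ c₁ n lam x‖ ≤
      (‖c₀‖ + ‖c₁‖ * |x - a|) * ((Cw + ‖lam‖) / ‖P‖) ^ n * |x - a| ^ (2 * n) / n ! := by
  induction n generalizing x with
  | zero =>
      simp only [FF, pow_zero, mul_one, mul_zero, Nat.factorial_zero, Nat.cast_one, div_one]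
      calc ‖c₀ + c₁ * ((x : ℂ) - (a : ℂ))‖ ≤ ‖c₀‖ + ‖c₁ * ((x : ℂ) - (a : ℂ))‖ :=
            norm_add_le _ _
        _ = ‖c₀‖ + ‖c₁‖ * |x - a| := by
            rw [norm_mul, show ((x : ℂ) - (a : ℂ)) = ((x - a : ℝ) : ℂ) by push_cast; ring,
              Complex.norm_real, Real.norm_eq_abs]
  | succ n ih =>
      set K := (Cw + ‖lam‖) / ‖P‖ with hK
      have hK0 : 0 ≤ K := div_nonneg (by positivity) (norm_nonneg _)
      set M := |x - a| * K ^ (n + 1) * ((‖c₀‖ + ‖c₁‖ * |x - a|) / n !) with hM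
      have hM0 : 0 ≤ M := by positivity
      set f : ℝ → ℂ := fun t =>
        ((x : ℂ) - (t : ℂ)) * ((w t - lam) / P * FF a P w c₀ c₁ n lam t) with hf
      have hfc : Continuous f := by
        exact (continuous_const.sub Complex.continuous_ofReal).mul
          (((hw.sub continuous_const).div_const P).mul
            (((FF_cont hw n).1).comp (continuous_const.prodMk continuous_id)))
      have hbd : ∀ t ∈ uIcc a x, ‖f t‖ ≤ M * (t - a) ^ (2 * n) := by
        intro t ht
        have hta : |t - a| ≤ |x - a| := by
          rcases le_total a x with h | h
          · rw [uIcc_of_le h] at ht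
            rw [abs_of_nonneg (by linarith [ht.1]), abs_of_nonneg (by linarith [h])]
            linarith [ht.2]
          · rw [uIcc_of_ge h] at ht
            rw [abs_of_nonpos (by linarith [ht.2]), abs_of_nonpos (by linarith [h])]
            linarith [ht.1]
        have hxt : ‖((x : ℂ) - (t : ℂ))‖ ≤ |x - a| := by
          rw [show ((x : ℂ) - (t : ℂ)) = ((x - t : ℝ) : ℂ) by push_cast; ring,
            Complex.norm_real, Real.norm_eq_abs]
          rcases le_total a x with h | h
          · rw [uIcc_of_le h] at ht
            rw [abs_of_nonneg (by linarith [ht.2]), abs_of_nonneg (by linarith [h])]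
            linarith [ht.1]
          · rw [uIcc_of_ge h] at ht
            rw [abs_of_nonpos (by linarith [ht.1]), abs_of_nonpos (by linarith [h])]
            linarith [ht.2]
        have hg : ‖(w t - lam) / P‖ ≤ K := by
          rw [norm_div]
          rcases (norm_nonneg P).eq_or_lt with hP | hP
          · simp [hK, ← hP]
          · have h1 : ‖w t - lam‖ ≤ Cw + ‖lam‖ :=
              (norm_sub_le _ _).trans (by gcongr; exact hwb t)
            exact (div_le_div_iff_of_pos_right hP).mpr h1
        calc ‖f t‖ = ‖((x : ℂ) - (t : ℂ))‖ * (‖(w t - lam) / P‖ * ‖FF a P w c₀ c₁ n lam t‖) := by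
              rw [hf]; simp [norm_mul]
          _ ≤ |x - a| * (K * ((‖c₀‖ + ‖c₁‖ * |x - a|) * K ^ n * |t - a| ^ (2 * n) / n !)) := by
              apply mul_le_mul hxt ?_ (by positivity) (abs_nonneg _)
              apply mul_le_mul hg ?_ (norm_nonneg _) hK0
              refine (ih t).trans ?_
              gcongr
          _ = M * |t - a| ^ (2 * n) := by rw [hM]; ring
          _ = M * (t - a) ^ (2 * n) := by rw [(even_two_mul n).pow_abs]
      have hintle : ‖FF a P w c₀ c₁ (n + 1) lam x‖ ≤
          M * (|x - a| ^ (2 * n + 1) / (2 * n + 1)) := by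
        have hFeq : FF a P w c₀ c₁ (n + 1) lam x = ∫ t in a..x, f t := rfl
        rcases le_total a x with h | h
        · rw [hFeq]
          calc ‖∫ t in a..x, f t‖ ≤ ∫ t in a..x, ‖f t‖ := norm_integral_le_integral_norm h
            _ ≤ ∫ t in a..x, M * (t - a) ^ (2 * n) := by
                apply integral_mono_on h (hfc.norm.intervalIntegrable _ _)
                  ((continuous_const.mul ((continuous_id.sub continuous_const).pow _)).intervalIntegrable _ _)
                intro t ht
                exact hbd t (by rwa [uIcc_of_le h])
            _ = M * (|x - a| ^ (2 * n + 1) / (2 * n + 1)) := by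
                rw [intervalIntegral.integral_const_mul, integral_sub_pow,
                  abs_of_nonneg (by linarith)]
                push_cast; ring_nf
        · rw [hFeq, intervalIntegral.integral_symm, norm_neg]
          calc ‖∫ t in x..a, f t‖ ≤ ∫ t in x..a, ‖f t‖ := norm_integral_le_integral_norm h
            _ ≤ ∫ t in x..a, M * (t - a) ^ (2 * n) := by
                apply integral_mono_on h (hfc.norm.intervalIntegrable _ _)
                  ((continuous_const.mul ((continuous_id.sub continuous_const).pow _)).intervalIntegrable _ _)
                intro t ht
                exact hbd t (by rwa [uIcc_of_ge h])
            _ = M * (|x - a| ^ (2 * n + 1) / (2 * n + 1)) := by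
                have h2 : ∫ t in x..a, (t - a) ^ (2 * n) =
                    ∫ s in (x - a)..(a - a), s ^ (2 * n) := by
                  rw [intervalIntegral.integral_comp_sub_right (fun s => s ^ (2 * n)) a]
                rw [intervalIntegral.integral_const_mul, h2, sub_self, integral_pow,
                  zero_pow (by omega)]
                have h3 : |x - a| = -(x - a) := abs_of_nonpos (by linarith)
                rw [h3, Odd.neg_pow (odd_two_mul_add_one n)]
                push_cast; ring
      refine hintle.trans ?_
      have e1 : M * (|x - a| ^ (2 * n + 1) / (2 * n + 1)) =
          (‖c₀‖ + ‖c₁‖ * |x - a|) * K ^ (n + 1) * |x - a| ^ (2 * (n + 1)) /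
            ((2 * n + 1) * n !) := by
        rw [hM]
        have hn0 : (n ! : ℝ) ≠ 0 := by positivity
        have h210 : (2 * (n : ℝ) + 1) ≠ 0 := by positivity
        field_simp
        ring
      rw [e1]
      have hfa : ((n + 1)! : ℝ) ≤ (2 * (n : ℝ) + 1) * n ! := by
        rw [Nat.factorial_succ]
        push_cast
        nlinarith [Nat.cast_nonneg (α := ℝ) n, (by positivity : (0 : ℝ) < (n ! : ℝ))]
      gcongr

lemma FF_hasDerivAt (hw : Continuous w) (n : ℕ) (lam : ℂ) (x : ℝ) :
    HasDerivAt (fun μ => FF a P w c₀ c₁ n μ x) (dFF a P w c₀ c₁ n lam x) lam := by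
  induction n generalizing lam x with
  | zero => simp only [FF, dFF]; exact hasDerivAt_const _ _
  | succ n ih =>
      -- continuity facts
      have hFc := (FF_cont (a := a) (P := P) (c₀ := c₀) (c₁ := c₁) hw n).1
      have hdFc := (FF_cont (a := a) (P := P) (c₀ := c₀) (c₁ := c₁) hw n).2
      set Fi : ℂ → ℝ → ℂ := fun μ t =>
        ((x : ℂ) - (t : ℂ)) * ((w t - μ) / P * FF a P w c₀ c₁ n μ t) with hFi
      set Fi' : ℂ → ℝ → ℂ := fun μ t =>
        ((x : ℂ) - (t : ℂ)) *
          ((w t - μ) / P * dFF a P w c₀ c₁ n μ t - FF a P w c₀ c₁ n μ t / P) with hFi'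
      have hFicont : ∀ μ, Continuous fun t => Fi μ t := by
        intro μ
        exact (continuous_const.sub Complex.continuous_ofReal).mul
          ((((hw.sub continuous_const).div_const P)).mul
            (hFc.comp (continuous_const.prodMk continuous_id)))
      have hFi'cont : Continuous fun pr : ℂ × ℝ => Fi' pr.1 pr.2 := by
        apply Continuous.mul
        · fun_prop
        · exact ((((hw.comp continuous_snd).sub continuous_fst).div_const P).mul
            (hdFc.comp continuous_id)).sub ((hFc.comp continuous_id).div_const P)
      -- bound from compactness
      obtain ⟨C, hC⟩ := ((isCompact_closedBall lam 1).prod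
        (isCompact_uIcc (a := a) (b := x))).exists_bound_of_continuousOn hFi'cont.continuousOn
      have key := intervalIntegral.hasDerivAt_integral_of_dominated_loc_of_deriv_le
        (𝕜 := ℂ) (μ := volume) (F := Fi) (F' := Fi') (x₀ := lam) (a := a) (b := x)
        (bound := fun _ => C) (ball_mem_nhds lam one_pos)
        (Eventually.of_forall fun μ => (hFicont μ).aestronglyMeasurable)
        ((hFicont lam).intervalIntegrable _ _)
        ((hFi'cont.comp (continuous_const.prodMk continuous_id)).aestronglyMeasurable)
        (ae_of_all _ fun t ht μ hμ =>
          hC (μ, t) ⟨ball_subset_closedBall hμ, uIoc_subset_uIcc ht⟩)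
        intervalIntegrable_const
        (ae_of_all _ fun t _ μ _ => by
          have hg : HasDerivAt (fun ν => (w t - ν) / P) (-1 / P) μ := by
            simpa using ((hasDerivAt_id μ).const_sub (w t)).div_const P
          have hprod := (hg.mul (ih μ t)).const_mul ((x : ℂ) - (t : ℂ))
          convert hprod using 1
          · rfl
          · rfl
          simp only [hFi']
          ring)
      have : dFF a P w c₀ c₁ (n + 1) lam x = ∫ t in a..x, Fi' lam t := rfl
      rw [show (fun μ => FF a P w c₀ c₁ (n + 1) μ x) = fun μ => ∫ t in a..x, Fi μ t from rfl,
        this]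
      exact key.2

lemma abs_sub_left_le {a x t : ℝ} (ht : t ∈ Set.uIcc a x) : |t - a| ≤ |x - a| := by
  rcases le_total a x with h | h
  · rw [uIcc_of_le h] at ht
    rw [abs_of_nonneg (by linarith [ht.1]), abs_of_nonneg (by linarith [h])]
    linarith [ht.2]
  · rw [uIcc_of_ge h] at ht
    rw [abs_of_nonpos (by linarith [ht.2]), abs_of_nonpos (by linarith [h])]
    linarith [ht.1]

lemma abs_sub_right_le {a x t : ℝ} (ht : t ∈ Set.uIcc a x) : |x - t| ≤ |x - a| := by
  rcases le_total a x with h | h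
  · rw [uIcc_of_le h] at ht
    rw [abs_of_nonneg (by linarith [ht.2]), abs_of_nonneg (by linarith [h])]
    linarith [ht.1]
  · rw [uIcc_of_ge h] at ht
    rw [abs_of_nonpos (by linarith [ht.1]), abs_of_nonpos (by linarith [h])]
    linarith [ht.2]

lemma g_norm_le (hwb : ∀ t, ‖w t‖ ≤ Cw) (hCw : 0 ≤ Cw) (lam : ℂ) (t : ℝ) :
    ‖(w t - lam) / P‖ ≤ (Cw + ‖lam‖) / ‖P‖ := by
  rw [norm_div]
  rcases (norm_nonneg P).eq_or_lt with hP | hP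
  · simp [← hP]
  · exact (div_le_div_iff_of_pos_right hP).mpr
      ((norm_sub_le _ _).trans (by gcongr; exact hwb t))

/-- monotone-in-parameters version of the bound -/
lemma FF_norm_le (hw : Continuous w) (hwb : ∀ t, ‖w t‖ ≤ Cw) (hCw : 0 ≤ Cw)
    {n : ℕ} {lam : ℂ} {x : ℝ} {R L : ℝ} (hR : |x - a| ≤ R) (hL : ‖lam‖ ≤ L) :
    ‖FF a P w c₀ c₁ n lam x‖ ≤
      (‖c₀‖ + ‖c₁‖ * R) * (((Cw + L) / ‖P‖ * R ^ 2) ^ n / n !) := by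
  refine (FF_norm hw hwb hCw n lam x).trans ?_
  have h1 : (‖c₀‖ + ‖c₁‖ * |x - a|) * ((Cw + ‖lam‖) / ‖P‖) ^ n * |x - a| ^ (2 * n) / n !
      ≤ (‖c₀‖ + ‖c₁‖ * R) * ((Cw + L) / ‖P‖) ^ n * R ^ (2 * n) / n ! := by
    have hR0 : 0 ≤ R := (abs_nonneg _).trans hR
    have hR0 : 0 ≤ R := (abs_nonneg _).trans hR
    have hL0 : 0 ≤ L := (norm_nonneg _).trans hL
    have hK0 : 0 ≤ (Cw + L) / ‖P‖ := by positivity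
    gcongr <;> first | exact div_nonneg (by positivity) (norm_nonneg _) | gcongr | exact hR | positivity
  refine h1.trans_eq ?_
  rw [mul_pow, ← pow_mul]
  ring

noncomputable def uu (a : ℝ) (P : ℂ) (w : ℝ → ℂ) (c₀ c₁ : ℂ) (lam : ℂ) (x : ℝ) : ℂ :=
  ∑' n, FF a P w c₀ c₁ n lam x

lemma FF_summable (hw : Continuous w) (hwb : ∀ t, ‖w t‖ ≤ Cw) (hCw : 0 ≤ Cw)
    (lam : ℂ) (x : ℝ) : Summable (fun n => FF a P w c₀ c₁ n lam x) := by
  apply Summable.of_norm_bounded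
    (g := fun n => (‖c₀‖ + ‖c₁‖ * |x - a|) *
      (((Cw + ‖lam‖) / ‖P‖ * |x - a| ^ 2) ^ n / n !))
    ((Real.summable_pow_div_factorial _).mul_left _)
  intro n
  exact FF_norm_le hw hwb hCw le_rfl le_rfl


lemma uu_cont (hw : Continuous w) (hwb : ∀ t, ‖w t‖ ≤ Cw) (hCw : 0 ≤ Cw) :
    Continuous (fun pr : ℂ × ℝ => uu a P w c₀ c₁ pr.1 pr.2) := by
  rw [continuous_iff_continuousAt]
  rintro ⟨lam₀, x₀⟩
  set s : Set (ℂ × ℝ) := closedBall lam₀ 1 ×ˢ Icc (x₀ - 1) (x₀ + 1) with hs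
  set R : ℝ := |x₀ - a| + 1 with hRdef
  set L : ℝ := ‖lam₀‖ + 1 with hLdef
  have hmem : ∀ pr : ℂ × ℝ, pr ∈ s → |pr.2 - a| ≤ R ∧ ‖pr.1‖ ≤ L := by
    rintro ⟨μ, x⟩ ⟨hμ, hx⟩
    constructor
    · have : |x - x₀| ≤ 1 := abs_le.mpr ⟨by linarith [hx.1], by linarith [hx.2]⟩
      calc |x - a| = |(x - x₀) + (x₀ - a)| := by ring_nf
        _ ≤ |x - x₀| + |x₀ - a| := abs_add_le _ _
        _ ≤ R := by rw [hRdef]; linarith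
    · have h1 : ‖μ - lam₀‖ ≤ 1 := mem_closedBall_iff_norm.mp hμ
      calc ‖μ‖ = ‖(μ - lam₀) + lam₀‖ := by ring_nf
        _ ≤ ‖μ - lam₀‖ + ‖lam₀‖ := norm_add_le _ _
        _ ≤ L := by rw [hLdef]; linarith
  have htu : TendstoUniformlyOn
      (fun (T : Finset ℕ) (pr : ℂ × ℝ) => ∑ n ∈ T, FF a P w c₀ c₁ n pr.1 pr.2)
      (fun pr : ℂ × ℝ => uu a P w c₀ c₁ pr.1 pr.2) atTop s := by
    apply tendstoUniformlyOn_tsum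
      (u := fun n => (‖c₀‖ + ‖c₁‖ * R) * (((Cw + L) / ‖P‖ * R ^ 2) ^ n / n !))
      ((Real.summable_pow_div_factorial _).mul_left _)
    intro n pr hpr
    exact FF_norm_le hw hwb hCw (hmem pr hpr).1 (hmem pr hpr).2
  have hco : ContinuousOn (fun pr : ℂ × ℝ => uu a P w c₀ c₁ pr.1 pr.2) s := by
    apply htu.continuousOn
    refine Frequently.of_forall fun T => ?_
    exact (continuous_finset_sum T fun i _ => (FF_cont hw i).1).continuousOn
  exact hco.continuousAt (by
    apply prod_mem_nhds (closedBall_mem_nhds _ one_pos)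
    exact Icc_mem_nhds (by linarith) (by linarith))

lemma uu_diff (hw : Continuous w) (hwb : ∀ t, ‖w t‖ ≤ Cw) (hCw : 0 ≤ Cw)
    (x : ℝ) (lam₀ : ℂ) : DifferentiableAt ℂ (fun μ => uu a P w c₀ c₁ μ x) lam₀ := by
  have hdo : DifferentiableOn ℂ (fun μ => uu a P w c₀ c₁ μ x) (ball lam₀ 1) := by
    apply Complex.differentiableOn_tsum_of_summable_norm
      (u := fun n => (‖c₀‖ + ‖c₁‖ * |x - a|) *
        (((Cw + (‖lam₀‖ + 1)) / ‖P‖ * |x - a| ^ 2) ^ n / n !))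
      ((Real.summable_pow_div_factorial _).mul_left _)
      (fun n => fun μ _ => (FF_hasDerivAt hw n μ x).differentiableAt.differentiableWithinAt)
      isOpen_ball
    intro n μ hμ
    apply FF_norm_le hw hwb hCw le_rfl
    have h1 : ‖μ - lam₀‖ ≤ 1 := (mem_ball_iff_norm.mp hμ).le
    calc ‖μ‖ = ‖(μ - lam₀) + lam₀‖ := by ring_nf
      _ ≤ ‖μ - lam₀‖ + ‖lam₀‖ := norm_add_le _ _
      _ ≤ ‖lam₀‖ + 1 := by linarith
  exact hdo.differentiableAt (isOpen_ball.mem_nhds (mem_ball_self one_pos))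

set_option maxHeartbeats 2000000 in
lemma uu_integral_eq (hw : Continuous w) (hwb : ∀ t, ‖w t‖ ≤ Cw) (hCw : 0 ≤ Cw)
    (lam : ℂ) (x : ℝ) :
    uu a P w c₀ c₁ lam x = c₀ + c₁ * ((x : ℂ) - (a : ℂ)) +
      ∫ t in a..x, ((x : ℂ) - (t : ℂ)) * ((w t - lam) / P * uu a P w c₀ c₁ lam t) := by
  have hsum := FF_summable (a := a) (P := P) (c₀ := c₀) (c₁ := c₁) hw hwb hCw lam
  set fcm : ℕ → C(ℝ, ℂ) := fun n =>
    ⟨fun t => ((x : ℂ) - (t : ℂ)) * ((w t - lam) / P * FF a P w c₀ c₁ n lam t),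
      (continuous_const.sub Complex.continuous_ofReal).mul
        (((hw.sub continuous_const).div_const P).mul
          (((FF_cont hw n).1).comp (continuous_const.prodMk continuous_id)))⟩ with hfcm
  have h2 : Summable fun n =>
      ‖(fcm n).restrict (⟨uIcc a x, isCompact_uIcc⟩ : TopologicalSpace.Compacts ℝ)‖ := by
    refine Summable.of_nonneg_of_le (fun n => norm_nonneg _) ?_
      (((Real.summable_pow_div_factorial ((Cw + ‖lam‖) / ‖P‖ * |x - a| ^ 2)).mul_left
        (‖c₀‖ + ‖c₁‖ * |x - a|)).mul_left (|x - a| * ((Cw + ‖lam‖) / ‖P‖)))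
    intro n
    apply ContinuousMap.norm_le _ (by positivity) |>.mpr
    rintro ⟨t, ht⟩
    have ht' : t ∈ Set.uIcc a x := ht
    have hta : |t - a| ≤ |x - a| := abs_sub_left_le ht'
    have hxt : ‖((x : ℂ) - (t : ℂ))‖ ≤ |x - a| := by
      rw [show ((x : ℂ) - (t : ℂ)) = ((x - t : ℝ) : ℂ) by push_cast; ring,
        Complex.norm_real, Real.norm_eq_abs]
      exact abs_sub_right_le ht'
    calc ‖(fcm n) t‖
        = ‖((x : ℂ) - (t : ℂ))‖ * (‖(w t - lam) / P‖ * ‖FF a P w c₀ c₁ n lam t‖) := by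
          simp [hfcm, norm_mul]
      _ ≤ |x - a| * (((Cw + ‖lam‖) / ‖P‖) *
          ((‖c₀‖ + ‖c₁‖ * |x - a|) * (((Cw + ‖lam‖) / ‖P‖ * |x - a| ^ 2) ^ n / n !))) := by
          apply mul_le_mul hxt ?_ (by positivity) (abs_nonneg _)
          apply mul_le_mul (g_norm_le hwb hCw lam t) ?_ (norm_nonneg _)
            (div_nonneg (by positivity) (norm_nonneg _))
          exact FF_norm_le hw hwb hCw hta le_rfl
      _ = _ := by ring
  have h3 := tsum_intervalIntegral_eq_of_summable_norm (a := a) (b := x) h2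
  have h4 : ∀ t : ℝ, ∑' n, (fcm n) t =
      ((x : ℂ) - (t : ℂ)) * ((w t - lam) / P * uu a P w c₀ c₁ lam t) := by
    intro t
    simp only [hfcm, ContinuousMap.coe_mk]
    rw [tsum_mul_left, tsum_mul_left]
    rfl
  calc uu a P w c₀ c₁ lam x = FF a P w c₀ c₁ 0 lam x + ∑' n, FF a P w c₀ c₁ (n + 1) lam x :=
        Summable.tsum_eq_zero_add (hsum x)
    _ = c₀ + c₁ * ((x : ℂ) - (a : ℂ)) + ∑' n, ∫ t in a..x, (fcm n) t := rfl
    _ = c₀ + c₁ * ((x : ℂ) - (a : ℂ)) + ∫ t in a..x, ∑' n, (fcm n) t := by rw [h3]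
    _ = _ := by
        congr 1
        exact intervalIntegral.integral_congr fun t _ => h4 t

noncomputable def G (a : ℝ) (P : ℂ) (w : ℝ → ℂ) (c₀ c₁ : ℂ) (lam : ℂ) (t : ℝ) : ℂ :=
  (w t - lam) / P * uu a P w c₀ c₁ lam t

noncomputable def uD (a : ℝ) (P : ℂ) (w : ℝ → ℂ) (c₀ c₁ : ℂ) (lam : ℂ) (x : ℝ) : ℂ :=
  c₁ + ∫ t in a..x, G a P w c₀ c₁ lam t

section derivs

variable (hw : Continuous w) (hwb : ∀ t, ‖w t‖ ≤ Cw) (hCw : 0 ≤ Cw) (lam : ℂ)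

include hw hwb hCw in
lemma G_cont : Continuous (G a P w c₀ c₁ lam) := by
  apply ((hw.sub continuous_const).div_const P).mul
  exact (uu_cont hw hwb hCw).comp (continuous_const.prodMk continuous_id)

include hw hwb hCw in
lemma uu_key : uu a P w c₀ c₁ lam = fun x : ℝ => c₀ + c₁ * ((x : ℂ) - (a : ℂ)) +
    ((x : ℂ) * (∫ t in a..x, G a P w c₀ c₁ lam t)
      - ∫ t in a..x, (t : ℂ) * G a P w c₀ c₁ lam t) := by
  have hGc := G_cont (a := a) (P := P) (c₀ := c₀) (c₁ := c₁) hw hwb hCw lam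
  funext x
  rw [uu_integral_eq hw hwb hCw lam x]
  congr 1
  calc (∫ t in a..x, ((x : ℂ) - (t : ℂ)) * ((w t - lam) / P * uu a P w c₀ c₁ lam t))
      = ∫ t in a..x, ((x : ℂ) * G a P w c₀ c₁ lam t - (t : ℂ) * G a P w c₀ c₁ lam t) := by
        apply intervalIntegral.integral_congr
        intro t _
        simp only [G]
        ring
    _ = _ := by
        rw [intervalIntegral.integral_sub (f := fun t => (x : ℂ) * G a P w c₀ c₁ lam t)
          (g := fun t => (t : ℂ) * G a P w c₀ c₁ lam t) ((continuous_const.mul hGc).intervalIntegrable _ _)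
          ((Complex.continuous_ofReal.mul hGc).intervalIntegrable _ _),
          intervalIntegral.integral_const_mul]

include hw hwb hCw in
lemma uu_hasDerivAt_x (x₀ : ℝ) :
    HasDerivAt (uu a P w c₀ c₁ lam) (uD a P w c₀ c₁ lam x₀) x₀ := by
  have hGc := G_cont (a := a) (P := P) (c₀ := c₀) (c₁ := c₁) hw hwb hCw lam
  have hA : HasDerivAt (fun x => ∫ t in a..x, G a P w c₀ c₁ lam t)
      (G a P w c₀ c₁ lam x₀) x₀ :=
    intervalIntegral.integral_hasDerivAt_right (hGc.intervalIntegrable _ _)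
      hGc.stronglyMeasurable.stronglyMeasurableAtFilter hGc.continuousAt
  have hB : HasDerivAt (fun x => ∫ t in a..x, (t : ℂ) * G a P w c₀ c₁ lam t)
      ((x₀ : ℂ) * G a P w c₀ c₁ lam x₀) x₀ :=
    intervalIntegral.integral_hasDerivAt_right
      ((Complex.continuous_ofReal.mul hGc).intervalIntegrable _ _)
      (Complex.continuous_ofReal.mul hGc).stronglyMeasurable.stronglyMeasurableAtFilter
      (Complex.continuous_ofReal.mul hGc).continuousAt
  have hid : HasDerivAt (fun x : ℝ => (x : ℂ)) 1 x₀ := by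
    simpa using (hasDerivAt_id x₀).ofReal_comp
  have h := (((hid.sub_const (a : ℂ)).const_mul c₁).const_add c₀).add ((hid.mul hA).sub hB)
  rw [uu_key hw hwb hCw lam]
  convert h using 1
  · rfl
  · rfl
  simp only [uD]
  ring

include hw hwb hCw in
lemma uD_hasDerivAt_x (x₀ : ℝ) :
    HasDerivAt (uD a P w c₀ c₁ lam) ((w x₀ - lam) / P * uu a P w c₀ c₁ lam x₀) x₀ := by
  have hGc := G_cont (a := a) (P := P) (c₀ := c₀) (c₁ := c₁) hw hwb hCw lam
  have hA : HasDerivAt (fun x => ∫ t in a..x, G a P w c₀ c₁ lam t)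
      (G a P w c₀ c₁ lam x₀) x₀ :=
    intervalIntegral.integral_hasDerivAt_right (hGc.intervalIntegrable _ _)
      hGc.stronglyMeasurable.stronglyMeasurableAtFilter hGc.continuousAt
  exact hA.const_add c₁

include hw hwb hCw in
lemma uu_init : uu a P w c₀ c₁ lam a = c₀ := by
  rw [uu_integral_eq hw hwb hCw lam a]
  simp

lemma uD_init : uD a P w c₀ c₁ lam a = c₁ := by
  simp [uD]

end derivs

/-- Grönwall uniqueness for the second-order linear ODE -/
lemma unique_aux {w : ℝ → ℂ} {P : ℂ} {Kf : ℝ}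
    {a b : ℝ} (lam : ℂ) (hglb : ∀ t, ‖(w t - lam) / P‖ ≤ Kf)
    (v v' u u' : ℝ → ℂ)
    (hva : v a = u a) (hv'a : v' a = u' a)
    (hd1 : ∀ x ∈ Icc a b, HasDerivAt v (v' x) x)
    (hd2 : ∀ x ∈ Icc a b, HasDerivAt v' ((w x - lam) / P * v x) x)
    (he1 : ∀ x ∈ Icc a b, HasDerivAt u (u' x) x)
    (he2 : ∀ x ∈ Icc a b, HasDerivAt u' ((w x - lam) / P * u x) x) :
    ∀ x ∈ Icc a b, v x = u x := by
  have hKf0 : 0 ≤ Kf := le_trans (norm_nonneg _) (hglb 0)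
  set K : NNReal := Real.toNNReal (max 1 Kf) with hKdef
  have hKcoe : (K : ℝ) = max 1 Kf := Real.coe_toNNReal _ (le_trans zero_le_one (le_max_left _ _))
  set V : ℝ → ℂ × ℂ → ℂ × ℂ := fun t y => (y.2, (w t - lam) / P * y.1) with hV
  have hv : ∀ t, LipschitzWith K (V t) := by
    intro t
    apply LipschitzWith.of_dist_le_mul
    intro y z
    rw [Prod.dist_eq, Prod.dist_eq (x := y)]
    rw [hKcoe]
    have h2 : dist ((w t - lam) / P * y.1) ((w t - lam) / P * z.1)
        = ‖(w t - lam) / P‖ * dist y.1 z.1 := by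
      rw [dist_eq_norm, dist_eq_norm, ← mul_sub, norm_mul]
    simp only [hV]
    rw [h2]
    apply max_le
    · calc dist y.2 z.2 ≤ max (dist y.1 z.1) (dist y.2 z.2) := le_max_right _ _
        _ ≤ max 1 Kf * max (dist y.1 z.1) (dist y.2 z.2) :=
          le_mul_of_one_le_left (le_max_iff.mpr (Or.inl dist_nonneg)) (le_max_left _ _)
    · calc ‖(w t - lam) / P‖ * dist y.1 z.1 ≤ Kf * dist y.1 z.1 :=
          mul_le_mul_of_nonneg_right (hglb t) dist_nonneg
        _ ≤ Kf * max (dist y.1 z.1) (dist y.2 z.2) :=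
          mul_le_mul_of_nonneg_left (le_max_left _ _) hKf0
        _ ≤ max 1 Kf * max (dist y.1 z.1) (dist y.2 z.2) :=
          mul_le_mul_of_nonneg_right (le_max_right _ _)
            (le_max_iff.mpr (Or.inl dist_nonneg))
  have hsol := ODE_solution_unique (v := V) (K := K) hv
    (f := fun t => (v t, v' t)) (g := fun t => (u t, u' t)) (a := a) (b := b)
    (fun t ht => (((hd1 t ht).continuousAt).prodMk ((hd2 t ht).continuousAt)).continuousWithinAt)
    (fun t ht => (((hd1 t (Ico_subset_Icc_self ht)).prodMk
      (hd2 t (Ico_subset_Icc_self ht)))).hasDerivWithinAt)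
    (fun t ht => (((he1 t ht).continuousAt).prodMk ((he2 t ht).continuousAt)).continuousWithinAt)
    (fun t ht => (((he1 t (Ico_subset_Icc_self ht)).prodMk
      (he2 t (Ico_subset_Icc_self ht)))).hasDerivWithinAt)
    (by simp [hva, hv'a])
  intro x hx
  exact congrArg Prod.fst (hsol hx)

end Stmt11Aux

/-- the initial value problem `-p² u'' + q u = λ u` on `[a,b]`,
`u(a) = c₀`, `u'(a) = c₁` (with `p ≠ 0` real, `q` continuous, `λ ∈ ℂ`) has a unique
solution `u(·,λ)`, and for each fixed `x ∈ [a,b]` the map `λ ↦ u(x,λ)` is entire. -/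
theorem stmt_11 (a b : ℝ) (hab : a < b) (p : ℝ) (hp : p ≠ 0)
    (q : ℝ → ℝ) (hq : ContinuousOn q (Set.Icc a b)) (c₀ c₁ : ℂ) :
    ∃ u u' : ℂ → ℝ → ℂ,
      (∀ lam : ℂ,
        u lam a = c₀ ∧ u' lam a = c₁ ∧
        (∀ x ∈ Set.Icc a b, HasDerivAt (u lam) (u' lam x) x) ∧
        (∀ x ∈ Set.Icc a b,
          HasDerivAt (u' lam) ((((q x : ℂ) - lam) / (p : ℂ) ^ 2) * u lam x) x)) ∧
      (∀ (lam : ℂ) (v v' : ℝ → ℂ),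
        v a = c₀ → v' a = c₁ →
        (∀ x ∈ Set.Icc a b, HasDerivAt v (v' x) x) →
        (∀ x ∈ Set.Icc a b,
          HasDerivAt v' ((((q x : ℂ) - lam) / (p : ℂ) ^ 2) * v x) x) →
        ∀ x ∈ Set.Icc a b, v x = u lam x) ∧
      (∀ x ∈ Set.Icc a b, ∀ lam : ℂ, DifferentiableAt ℂ (fun μ => u μ x) lam) := by
  classical
  open Stmt11Aux in
  set w : ℝ → ℂ := fun t => ((q (max a (min b t)) : ℝ) : ℂ) with hwdef
  have hproj : ∀ t : ℝ, max a (min b t) ∈ Set.Icc a b := fun t =>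
    ⟨le_max_left _ _, max_le hab.le (min_le_left _ _)⟩
  have hw : Continuous w := by
    apply Complex.continuous_ofReal.comp
    exact hq.comp_continuous (continuous_const.max (continuous_const.min continuous_id)) hproj
  obtain ⟨Cw, hCwb⟩ := (isCompact_Icc (a := a) (b := b)).exists_bound_of_continuousOn hq
  have hCw0 : 0 ≤ Cw := (norm_nonneg _).trans (hCwb a ⟨le_refl a, hab.le⟩)
  have hwb : ∀ t, ‖w t‖ ≤ Cw := fun t => by
    simpa [hwdef, Complex.norm_real] using hCwb _ (hproj t)
  have hwq : ∀ x ∈ Set.Icc a b, w x = ((q x : ℝ) : ℂ) := fun x hx => by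
    simp [hwdef, min_eq_right hx.2, max_eq_right hx.1]
  set P : ℂ := (p : ℂ) ^ 2 with hPdef
  refine ⟨uu a P w c₀ c₁, uD a P w c₀ c₁, ?_, ?_, ?_⟩
  · intro lam
    refine ⟨uu_init (a := a) (P := P) (w := w) (c₀ := c₀) (c₁ := c₁) hw hwb hCw0 lam, uD_init (a := a) (P := P) (w := w) (c₀ := c₀) (c₁ := c₁) lam,
      fun x _ => uu_hasDerivAt_x (a := a) (P := P) (w := w) (c₀ := c₀) (c₁ := c₁) hw hwb hCw0 lam x, ?_⟩
    intro x hx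
    have h := uD_hasDerivAt_x (a := a) (P := P) (w := w) (c₀ := c₀) (c₁ := c₁) hw hwb hCw0 lam x
    rwa [hwq x hx] at h
  · intro lam v v' hva hv'a hd1 hd2
    have hd2' : ∀ x ∈ Set.Icc a b, HasDerivAt v' ((w x - lam) / P * v x) x := by
      intro x hx
      have h := hd2 x hx
      rwa [← hwq x hx] at h
    exact unique_aux lam (fun t => g_norm_le (P := P) (w := w) hwb hCw0 lam t) v v' _ _
      (by rw [hva, uu_init (a := a) (P := P) (w := w) (c₀ := c₀) (c₁ := c₁) hw hwb hCw0 lam]) (by rw [hv'a, uD_init])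
      hd1 hd2' (fun x _ => uu_hasDerivAt_x (a := a) (P := P) (w := w) (c₀ := c₀) (c₁ := c₁) hw hwb hCw0 lam x)
      (fun x _ => uD_hasDerivAt_x (a := a) (P := P) (w := w) (c₀ := c₀) (c₁ := c₁) hw hwb hCw0 lam x)
  · intro x _ lam
    exact uu_diff (a := a) (P := P) (w := w) (c₀ := c₀) (c₁ := c₁) hw hwb hCw0 x lam
end

section
/- Suppose f and g are solutions on [-1,1] (away from interior points h₁ < h₂ < h₃) of the same piecewise Sturm-Liouville equation -p(x)² u'' + q u = λ u, both satisfy the boundary condition α₁ u(-1) + α₂ u'(-1) = 0 with (α₁,α₂) ≠ (0,0), and both satisfy the same transmission conditions u(hᵢ+) = α u(hᵢ-) + β u'(hᵢ-), u'(hᵢ+) = γ u(hᵢ-) + δ u'(hᵢ-) at each hᵢ, with the transmission matrices invertible. Then f and g are linearly dependent: f = K g on [-1,1] for some constant K. In particular every eigenvalue of the boundary-transmission problem is geometrically simple. -/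
/-- `u` (with derivative `u'`) solves `-p² u'' + q u = lam·u` on `[c,d]`. -/
def SLSol (p : ℝ) (q : ℝ → ℝ) (lam : ℂ) (c d : ℝ) (u u' : ℝ → ℂ) : Prop :=
  ∀ x ∈ Set.Icc c d,
    HasDerivAt u (u' x) x ∧
    HasDerivAt u' ((((q x : ℂ) - lam) / (p : ℂ) ^ 2) * u x) x

open Set
lemma SLSol.smul {p : ℝ} {q : ℝ → ℝ} {lam : ℂ} {c d : ℝ} {u u' : ℝ → ℂ}
    (h : SLSol p q lam c d u u') (K : ℂ) :
    SLSol p q lam c d (fun x => K * u x) (fun x => K * u' x) := by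
  intro x hx
  refine ⟨(h x hx).1.const_mul K, ?_⟩
  have := (h x hx).2.const_mul K
  convert this using 1
  · rfl
  · ring

lemma sl_unique {p : ℝ} {q : ℝ → ℝ} (hq : Continuous q) {lam : ℂ}
    {c d : ℝ} (hcd : c ≤ d) {u u' w w' : ℝ → ℂ}
    (hu : SLSol p q lam c d u u') (hw : SLSol p q lam c d w w')
    (h0 : u c = w c) (h0' : u' c = w' c) :
    ∀ x ∈ Set.Icc c d, u x = w x ∧ u' x = w' x := by
  set m : ℝ → ℂ := fun t => (((q (min (max t c) d) : ℝ) : ℂ) - lam) / (p : ℂ) ^ 2 with hm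
  have hclamp : ∀ t ∈ Icc c d, min (max t c) d = t := by
    intro t ht
    rw [max_eq_left ht.1, min_eq_left ht.2]
  -- m is bounded
  have hmc : Continuous m := by
    apply Continuous.div_const
    exact (Complex.continuous_ofReal.comp
      (hq.comp ((continuous_id.max continuous_const).min continuous_const))).sub continuous_const
  obtain ⟨z, hz, hzmax⟩ := (isCompact_Icc (a := c) (b := d)).exists_isMaxOn
    (nonempty_Icc.mpr hcd) (hmc.norm.continuousOn)
  set M : ℝ := max 1 ‖m z‖ with hM
  have hMbound : ∀ t : ℝ, ‖m t‖ ≤ M := by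
    intro t
    have hmem : min (max t c) d ∈ Icc c d := by
      constructor
      · exact le_min (le_max_right t c) hcd
      · exact min_le_right _ _
    have : m t = m (min (max t c) d) := by
      simp only [hm]
      rw [hclamp _ hmem]
    rw [this]
    exact le_max_of_le_right (hzmax hmem)
  set V : ℝ → ℂ × ℂ → ℂ × ℂ := fun t y => (y.2, m t * y.1) with hV
  have hM0 : 0 ≤ M := le_trans zero_le_one (le_max_left _ _)
  set K : NNReal := Real.toNNReal M with hK
  have hKcoe : (K : ℝ) = M := Real.coe_toNNReal M hM0
  have hlip : ∀ t, LipschitzWith K (V t) := by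
    intro t
    apply LipschitzWith.of_dist_le_mul
    intro y z
    have hd1 : dist y.1 z.1 ≤ dist y z := by rw [Prod.dist_eq]; exact le_max_left _ _
    have hd2 : dist y.2 z.2 ≤ dist y z := by rw [Prod.dist_eq]; exact le_max_right _ _
    rw [hKcoe, Prod.dist_eq]
    apply max_le
    · calc dist y.2 z.2 ≤ dist y z := hd2
        _ ≤ M * dist y z := le_mul_of_one_le_left dist_nonneg (le_max_left _ _)
    · have : dist (m t * y.1) (m t * z.1) = ‖m t‖ * dist y.1 z.1 := by
        rw [dist_eq_norm, dist_eq_norm, ← mul_sub, norm_mul]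
      rw [this]
      exact mul_le_mul (hMbound t) hd1 dist_nonneg hM0
  set F : ℝ → ℂ × ℂ := fun t => (u t, u' t) with hF
  set G : ℝ → ℂ × ℂ := fun t => (w t, w' t) with hG
  have hmeq : ∀ t ∈ Icc c d, m t = ((q t : ℂ) - lam) / (p : ℂ) ^ 2 := by
    intro t ht; simp only [hm]; rw [hclamp t ht]
  have hFc : ContinuousOn F (Icc c d) := by
    intro t ht
    exact (((hu t ht).1.continuousAt.prodMk (hu t ht).2.continuousAt)).continuousWithinAt
  have hGc : ContinuousOn G (Icc c d) := by
    intro t ht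
    exact (((hw t ht).1.continuousAt.prodMk (hw t ht).2.continuousAt)).continuousWithinAt
  have hFd : ∀ t ∈ Ico c d, HasDerivWithinAt F (V t (F t)) (Ici t) t := by
    intro t ht
    have ht' : t ∈ Icc c d := Ico_subset_Icc_self ht
    have := ((hu t ht').1.prodMk (hu t ht').2).hasDerivWithinAt (s := Ici t)
    refine this.congr_deriv ?_
    show _ = (u' t, m t * u t)
    rw [hmeq t ht']
  have hGd : ∀ t ∈ Ico c d, HasDerivWithinAt G (V t (G t)) (Ici t) t := by
    intro t ht
    have ht' : t ∈ Icc c d := Ico_subset_Icc_self ht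
    have := ((hw t ht').1.prodMk (hw t ht').2).hasDerivWithinAt (s := Ici t)
    refine this.congr_deriv ?_
    show _ = (w' t, m t * w t)
    rw [hmeq t ht']
  have heq : EqOn F G (Icc c d) := by
    apply ODE_solution_unique_of_mem_Icc_right (s := fun _ => univ)
      (fun t _ => (hlip t).lipschitzOnWith) hFc hFd (fun _ _ => trivial) hGc hGd (fun _ _ => trivial)
    simp only [hF, hG, h0, h0']
  intro x hx
  have := heq hx
  exact ⟨congrArg Prod.fst this, congrArg Prod.snd this⟩

/-- two solutions `f`, `g` (represented by their restrictions to the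
four subintervals cut by `h₁ < h₂ < h₃`) of the same piecewise Sturm–Liouville
equation, satisfying the same boundary condition `α₁u(-1) + α₂u'(-1) = 0` with
`(α₁,α₂) ≠ (0,0)` and the same transmission conditions with invertible transmission
matrices at `h₁, h₂, h₃`, are linearly dependent: `f = K·g` on all of `[-1,1]`
(so each eigenvalue is geometrically simple). -/
theorem stmt_12 (h₁ h₂ h₃ : ℝ) (hh0 : -1 < h₁) (hh1 : h₁ < h₂) (hh2 : h₂ < h₃) (hh3 : h₃ < 1)
    (p₁ p₂ p₃ p₄ : ℝ) (hp₁ : p₁ ≠ 0) (hp₂ : p₂ ≠ 0) (hp₃ : p₃ ≠ 0) (hp₄ : p₄ ≠ 0)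
    (q : ℝ → ℝ) (hq : Continuous q) (lam : ℂ)
    (α₁ α₂ : ℝ) (hα : ¬(α₁ = 0 ∧ α₂ = 0))
    -- transmission coefficients at h₁, h₂, h₃ with invertible matrices
    (a₁ b₁ c₁ d₁ a₂ b₂ c₂ d₂ a₃ b₃ c₃ d₃ : ℝ)
    (hdet₁ : a₁ * d₁ - b₁ * c₁ ≠ 0) (hdet₂ : a₂ * d₂ - b₂ * c₂ ≠ 0)
    (hdet₃ : a₃ * d₃ - b₃ * c₃ ≠ 0)
    (f₁ f₁' f₂ f₂' f₃ f₃' f₄ f₄' g₁ g₁' g₂ g₂' g₃ g₃' g₄ g₄' : ℝ → ℂ)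
    -- f solves the equation piecewise
    (hf₁ : SLSol p₁ q lam (-1) h₁ f₁ f₁') (hf₂ : SLSol p₂ q lam h₁ h₂ f₂ f₂')
    (hf₃ : SLSol p₃ q lam h₂ h₃ f₃ f₃') (hf₄ : SLSol p₄ q lam h₃ 1 f₄ f₄')
    -- g solves the equation piecewise
    (hg₁ : SLSol p₁ q lam (-1) h₁ g₁ g₁') (hg₂ : SLSol p₂ q lam h₁ h₂ g₂ g₂')
    (hg₃ : SLSol p₃ q lam h₂ h₃ g₃ g₃') (hg₄ : SLSol p₄ q lam h₃ 1 g₄ g₄')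
    -- boundary conditions at -1
    (hbf : (α₁ : ℂ) * f₁ (-1) + (α₂ : ℂ) * f₁' (-1) = 0)
    (hbg : (α₁ : ℂ) * g₁ (-1) + (α₂ : ℂ) * g₁' (-1) = 0)
    -- g is a nontrivial solution (an eigenfunction)
    (hgnt : ¬(g₁ (-1) = 0 ∧ g₁' (-1) = 0))
    -- transmission conditions for f
    (htf₁ : f₂ h₁ = (a₁ : ℂ) * f₁ h₁ + (b₁ : ℂ) * f₁' h₁)
    (htf₁' : f₂' h₁ = (c₁ : ℂ) * f₁ h₁ + (d₁ : ℂ) * f₁' h₁)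
    (htf₂ : f₃ h₂ = (a₂ : ℂ) * f₂ h₂ + (b₂ : ℂ) * f₂' h₂)
    (htf₂' : f₃' h₂ = (c₂ : ℂ) * f₂ h₂ + (d₂ : ℂ) * f₂' h₂)
    (htf₃ : f₄ h₃ = (a₃ : ℂ) * f₃ h₃ + (b₃ : ℂ) * f₃' h₃)
    (htf₃' : f₄' h₃ = (c₃ : ℂ) * f₃ h₃ + (d₃ : ℂ) * f₃' h₃)
    -- transmission conditions for g
    (htg₁ : g₂ h₁ = (a₁ : ℂ) * g₁ h₁ + (b₁ : ℂ) * g₁' h₁)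
    (htg₁' : g₂' h₁ = (c₁ : ℂ) * g₁ h₁ + (d₁ : ℂ) * g₁' h₁)
    (htg₂ : g₃ h₂ = (a₂ : ℂ) * g₂ h₂ + (b₂ : ℂ) * g₂' h₂)
    (htg₂' : g₃' h₂ = (c₂ : ℂ) * g₂ h₂ + (d₂ : ℂ) * g₂' h₂)
    (htg₃ : g₄ h₃ = (a₃ : ℂ) * g₃ h₃ + (b₃ : ℂ) * g₃' h₃)
    (htg₃' : g₄' h₃ = (c₃ : ℂ) * g₃ h₃ + (d₃ : ℂ) * g₃' h₃) :
    ∃ K : ℂ,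
      (∀ x ∈ Set.Icc (-1 : ℝ) h₁, f₁ x = K * g₁ x) ∧
      (∀ x ∈ Set.Icc h₁ h₂, f₂ x = K * g₂ x) ∧
      (∀ x ∈ Set.Icc h₂ h₃, f₃ x = K * g₃ x) ∧
      (∀ x ∈ Set.Icc h₃ (1 : ℝ), f₄ x = K * g₄ x) := by
  have hKex : ∃ K : ℂ, f₁ (-1) = K * g₁ (-1) ∧ f₁' (-1) = K * g₁' (-1) := by
    by_cases hg0 : g₁ (-1) = 0
    · have hg1 : g₁' (-1) ≠ 0 := fun h => hgnt ⟨hg0, h⟩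
      have hα₂ : (α₂ : ℂ) = 0 := by
        rw [hg0, mul_zero, zero_add] at hbg
        exact (mul_eq_zero.mp hbg).resolve_right hg1
      have hα₁ : (α₁ : ℂ) ≠ 0 := by
        intro h
        exact hα ⟨by exact_mod_cast h, by exact_mod_cast hα₂⟩
      have hf0 : f₁ (-1) = 0 := by
        rw [hα₂, zero_mul, add_zero] at hbf
        exact (mul_eq_zero.mp hbf).resolve_left hα₁
      exact ⟨f₁' (-1) / g₁' (-1), by rw [hf0, hg0, mul_zero], by field_simp⟩
    · have hα₂ : (α₂ : ℂ) ≠ 0 := by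
        intro h2
        rw [h2, zero_mul, add_zero] at hbg
        rcases mul_eq_zero.mp hbg with h | h
        · exact hα ⟨by exact_mod_cast h, by exact_mod_cast h2⟩
        · exact hg0 h
      have hw : f₁' (-1) * g₁ (-1) = f₁ (-1) * g₁' (-1) := by
        have key : (α₂:ℂ) * (f₁' (-1) * g₁ (-1) - f₁ (-1) * g₁' (-1)) = 0 := by
          linear_combination g₁ (-1) * hbf - f₁ (-1) * hbg
        have := (mul_eq_zero.mp key).resolve_left hα₂
        linear_combination this
      refine ⟨f₁ (-1) / g₁ (-1), by field_simp, ?_⟩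
      field_simp
      linear_combination hw
  obtain ⟨K, hK1, hK2⟩ := hKex
  have e1 := sl_unique hq hh0.le hf₁ (hg₁.smul K) hK1 hK2
  have e1h := e1 h₁ ⟨hh0.le, le_refl _⟩
  have s2 : f₂ h₁ = K * g₂ h₁ := by
    rw [htf₁, htg₁, e1h.1, e1h.2]; ring
  have s2' : f₂' h₁ = K * g₂' h₁ := by
    rw [htf₁', htg₁', e1h.1, e1h.2]; ring
  have e2 := sl_unique hq hh1.le hf₂ (hg₂.smul K) s2 s2'
  have e2h := e2 h₂ ⟨hh1.le, le_refl _⟩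
  have s3 : f₃ h₂ = K * g₃ h₂ := by
    rw [htf₂, htg₂, e2h.1, e2h.2]; ring
  have s3' : f₃' h₂ = K * g₃' h₂ := by
    rw [htf₂', htg₂', e2h.1, e2h.2]; ring
  have e3 := sl_unique hq hh2.le hf₃ (hg₃.smul K) s3 s3'
  have e3h := e3 h₃ ⟨hh2.le, le_refl _⟩
  have s4 : f₄ h₃ = K * g₄ h₃ := by
    rw [htf₃, htg₃, e3h.1, e3h.2]; ring
  have s4' : f₄' h₃ = K * g₄' h₃ := by
    rw [htf₃', htg₃', e3h.1, e3h.2]; ring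
  have e4 := sl_unique hq hh3.le hf₄ (hg₄.smul K) s4 s4'
  exact ⟨K, fun x hx => (e1 x hx).1, fun x hx => (e2 x hx).1,
    fun x hx => (e3 x hx).1, fun x hx => (e4 x hx).1⟩
end
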